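/- Let U : ℝ≥0^n → ℝ be concave and continuously differentiable, let X ⊆ ℝ≥0^n be nonempty, compact, and convex, and let F = ∇U. Then the set of Nash equilibria of the full potential game F on X (points x ∈ X such that for each coordinate class, mass is placed only on coordinates with maximal payoff F) equals the set of maximizers of U over X, and hence is nonempty, compact, and convex. -/

import Mathlib

/-- Let `U` be a concave, continuously differentiable potential on the nonnegative
orthant, let `X` be the (nonempty) product of simplices `{x ≥ 0 : ∑_{i : cls i = c} x i = m c}`,
and let `F = ∇U` (coordinatewise partial derivatives). Then the set of Nash equilibria
of the full potential game `F` on `X` (points placing mass only on coordinates with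
class-maximal payoff) equals the set of maximizers of `U` over `X`, and hence is
nonempty, compact, and convex. -/
theorem stmt_5 {I C : Type*} [Fintype I] [DecidableEq I] [Fintype C] [DecidableEq C]
    (cls : I → C) (m : C → ℝ) (hm : ∀ c, 0 < m c)
    (U : (I → ℝ) → ℝ) (hU : ContDiff ℝ 1 U)
    (hUconc : ConcaveOn ℝ {x : I → ℝ | ∀ i, 0 ≤ x i} U)
    (X : Set (I → ℝ))
    (hX : X = {x | (∀ i, 0 ≤ x i) ∧
      ∀ c, ∑ i ∈ Finset.univ.filter (fun i => cls i = c), x i = m c})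
    (hXne : X.Nonempty)
    (F : (I → ℝ) → I → ℝ)
    (hF : ∀ x i, F x i = fderiv ℝ U x (Pi.single i 1))
    (NE : Set (I → ℝ))
    (hNE : NE = {x ∈ X | ∀ i, 0 < x i → ∀ j, cls j = cls i → F x j ≤ F x i}) :
    NE = {x ∈ X | ∀ y ∈ X, U y ≤ U x} ∧ NE.Nonempty ∧ IsCompact NE ∧ Convex ℝ NE := by
  classical
  have hdiff : Differentiable ℝ U := hU.differentiable one_ne_zero
  have hS : ∀ x ∈ X, ∀ i, 0 ≤ x i := by intro x hx; rw [hX] at hx; exact hx.1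
  have hsum : ∀ x ∈ X, ∀ c,
      ∑ i ∈ Finset.univ.filter (fun i => cls i = c), x i = m c := by
    intro x hx; rw [hX] at hx; exact hx.2
  -- convexity of X
  have hXconv : Convex ℝ X := by
    intro x hx y hy a b ha hb hab
    rw [hX]
    constructor
    · intro i
      have h1 := hS x hx i; have h2 := hS y hy i
      have : (a • x + b • y) i = a * x i + b * y i := by simp
      rw [this]
      have := mul_nonneg ha h1; have := mul_nonneg hb h2; linarith
    · intro c
      simp only [Pi.add_apply, Pi.smul_apply, smul_eq_mul]
      rw [Finset.sum_add_distrib, ← Finset.mul_sum, ← Finset.mul_sum,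
        hsum x hx c, hsum y hy c, ← add_mul, hab, one_mul]
  -- X is closed
  have hXclosed : IsClosed X := by
    rw [hX]
    have : {x : I → ℝ | (∀ i, 0 ≤ x i) ∧
        ∀ c, ∑ i ∈ Finset.univ.filter (fun i => cls i = c), x i = m c}
        = (⋂ i, {x : I → ℝ | 0 ≤ x i}) ∩
          (⋂ c, {x : I → ℝ | ∑ i ∈ Finset.univ.filter (fun i => cls i = c), x i = m c}) := by
      ext z; simp [Set.mem_iInter]
    rw [this]
    exact IsClosed.inter
      (isClosed_iInter fun i => isClosed_le continuous_const (continuous_apply i))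
      (isClosed_iInter fun c => isClosed_eq
        (continuous_finset_sum _ fun i _ => continuous_apply i) continuous_const)
  -- X is compact
  have hXcomp : IsCompact X := by
    refine IsCompact.of_isClosed_subset
      (isCompact_univ_pi fun i => isCompact_Icc (a := (0:ℝ)) (b := m (cls i))) hXclosed ?_
    intro x hx
    intro i _
    refine ⟨hS x hx i, ?_⟩
    calc x i ≤ ∑ k ∈ Finset.univ.filter (fun k => cls k = cls i), x k :=
          Finset.single_le_sum (fun k _ => hS x hx k) (by simp)
      _ = m (cls i) := hsum x hx (cls i)
  -- derivative along a line
  have hderiv : ∀ (x v : I → ℝ),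
      HasDerivAt (fun t : ℝ => U (x + t • v)) (fderiv ℝ U x v) 0 := by
    intro x v
    have h1 : HasDerivAt (fun t : ℝ => x + t • v) v 0 := by
      simpa using ((hasDerivAt_id (0:ℝ)).smul_const v).const_add x
    have hf : HasFDerivAt U (fderiv ℝ U x) (x + (0:ℝ) • v) := by
      simpa using (hdiff x).hasFDerivAt
    exact hf.comp_hasDerivAt 0 h1
  have hslope : ∀ (x v : I → ℝ),
      Filter.Tendsto (slope (fun t : ℝ => U (x + t • v)) 0)
        (nhdsWithin 0 (Set.Ioi 0)) (nhds (fderiv ℝ U x v)) := by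
    intro x v
    exact (hasDerivAt_iff_tendsto_slope.mp (hderiv x v)).mono_left
      (nhdsWithin_mono _ fun t ht => ne_of_gt ht)
  -- gradient inequality for the concave potential
  have hgrad : ∀ x ∈ X, ∀ y ∈ X, U y - U x ≤ fderiv ℝ U x (y - x) := by
    intro x hx y hy
    set v : I → ℝ := y - x with hv
    refine ge_of_tendsto (hslope x v) ?_
    filter_upwards [Ioo_mem_nhdsGT_of_mem (Set.left_mem_Ico.mpr one_pos)] with t ht
    have hcomb : (1-t) • x + t • y = x + t • v := by
      ext k; simp [hv]; ring
    have key : (1-t) * U x + t * U y ≤ U (x + t • v) := by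
      have := hUconc.2 (hS x hx) (hS y hy)
        (by linarith [ht.2] : (0:ℝ) ≤ 1 - t) (le_of_lt ht.1) (by ring)
      rw [hcomb] at this
      simpa using this
    have g0 : U (x + (0:ℝ) • v) = U x := by norm_num
    rw [slope_def_field, g0, sub_zero, le_div_iff₀ ht.1]
    nlinarith [key]
  -- expansion of the differential in coordinates
  have hexp : ∀ x y : I → ℝ, fderiv ℝ U x (y - x) = ∑ i, (y i - x i) * F x i := by
    intro x y
    have hdecomp : (y - x) = ∑ i, (y i - x i) • (Pi.single i (1:ℝ) : I → ℝ) := by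
      ext j; simp [Finset.sum_apply, Pi.single_apply]
    rw [hdecomp, map_sum]
    refine Finset.sum_congr rfl fun i _ => ?_
    rw [map_smul, smul_eq_mul, hF]
  -- the main equality
  have hmain : NE = {x ∈ X | ∀ y ∈ X, U y ≤ U x} := by
    rw [hNE]
    ext x
    simp only [Set.mem_setOf_eq, Set.mem_sep_iff]
    constructor
    · rintro ⟨hx, hne⟩
      refine ⟨hx, fun y hy => ?_⟩
      have hwit : ∀ c, ∃ k, cls k = c ∧ 0 < x k := by
        intro c
        by_contra hcon
        push_neg at hcon
        have hz : ∑ k ∈ Finset.univ.filter (fun k => cls k = c), x k = 0 :=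
          Finset.sum_eq_zero fun k hk =>
            le_antisymm (hcon k (Finset.mem_filter.mp hk).2) (hS x hx k)
        rw [hsum x hx c] at hz
        exact absurd hz (ne_of_gt (hm c))
      choose wit hwit1 hwit2 using hwit
      set lam : C → ℝ := fun c => F x (wit c) with hlam
      have hub : ∀ i, F x i ≤ lam (cls i) := fun i =>
        hne (wit (cls i)) (hwit2 (cls i)) i (hwit1 (cls i)).symm
      have heq : ∀ i, 0 < x i → F x i = lam (cls i) := fun i hpos =>
        le_antisymm (hub i) (hne i hpos (wit (cls i)) (hwit1 (cls i)))
      have h1 : ∑ i, y i * F x i ≤ ∑ i, y i * lam (cls i) :=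
        Finset.sum_le_sum fun i _ => mul_le_mul_of_nonneg_left (hub i) (hS y hy i)
      have h2 : ∑ i, x i * F x i = ∑ i, x i * lam (cls i) := by
        refine Finset.sum_congr rfl fun i _ => ?_
        rcases eq_or_lt_of_le (hS x hx i) with h | h
        · rw [← h]; ring
        · rw [heq i h]
      have h3 : ∀ z ∈ X, ∑ i, z i * lam (cls i) = ∑ c, m c * lam c := by
        intro z hz
        rw [← Finset.sum_fiberwise Finset.univ cls (fun i => z i * lam (cls i))]
        refine Finset.sum_congr rfl fun c _ => ?_
        have hcong : ∀ i ∈ Finset.univ.filter (fun i => cls i = c),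
            z i * lam (cls i) = z i * lam c := by
          intro i hi; rw [(Finset.mem_filter.mp hi).2]
        rw [Finset.sum_congr rfl hcong, ← Finset.sum_mul, hsum z hz c]
      have hsub : ∑ i, (y i - x i) * F x i = ∑ i, y i * F x i - ∑ i, x i * F x i := by
        rw [← Finset.sum_sub_distrib]
        exact Finset.sum_congr rfl fun i _ => by ring
      have hch := hgrad x hx y hy
      rw [hexp x y, hsub] at hch
      have hy3 := h3 y hy
      have hx3 := h3 x hx
      linarith
    · rintro ⟨hx, hmax⟩
      refine ⟨hx, fun i hi j hcls => ?_⟩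
      by_contra hlt
      push_neg at hlt
      have hij : i ≠ j := fun h => by rw [h] at hlt; exact lt_irrefl _ hlt
      set v : I → ℝ := Pi.single j 1 - Pi.single i 1 with hv
      have hd : fderiv ℝ U x v = F x j - F x i := by
        rw [hv, map_sub, ← hF, ← hF]
      have hdpos : 0 < fderiv ℝ U x v := by rw [hd]; linarith
      have h1 : ∀ᶠ t in nhdsWithin 0 (Set.Ioi 0),
          0 < slope (fun t : ℝ => U (x + t • v)) 0 t :=
        (hslope x v).eventually (eventually_gt_nhds hdpos)
      have h2 : Set.Ioo (0:ℝ) (x i) ∈ nhdsWithin 0 (Set.Ioi 0) :=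
        Ioo_mem_nhdsGT_of_mem (Set.left_mem_Ico.mpr hi)
      obtain ⟨t, hst, ht⟩ := (h1.and (Filter.eventually_of_mem h2 fun t ht => ht)).exists
      have g0 : U (x + (0:ℝ) • v) = U x := by norm_num
      rw [slope_def_field, g0, sub_zero] at hst
      have hgt : U x < U (x + t • v) := by
        rcases div_pos_iff.mp hst with ⟨h, _⟩ | ⟨_, h⟩
        · linarith
        · linarith [ht.1]
      have hmem : x + t • v ∈ X := by
        rw [hX]
        constructor
        · intro k
          rcases eq_or_ne k i with rfl | hki
          · have hval : (x + t • v) k = x k - t := by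
              simp [hv, Pi.single_apply, hij.symm]; ring
            rw [hval]; linarith [ht.2]
          · rcases eq_or_ne k j with rfl | hkj
            · have hval : (x + t • v) k = x k + t := by
                simp [hv, Pi.single_apply, hij]
              rw [hval]; linarith [hS x hx k, ht.1]
            · have hval : (x + t • v) k = x k := by
                simp [hv, Pi.single_apply, hki, hkj]
              rw [hval]; exact hS x hx k
        · intro c
          have hsv : ∑ k ∈ Finset.univ.filter (fun k => cls k = c), v k = 0 := by
            simp only [hv, Pi.sub_apply, Finset.sum_sub_distrib, Pi.single_apply]
            rw [Finset.sum_ite_eq' _ j (fun _ => (1:ℝ)),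
              Finset.sum_ite_eq' _ i (fun _ => (1:ℝ))]
            simp [Finset.mem_filter, hcls]
          simp only [Pi.add_apply, Pi.smul_apply, smul_eq_mul]
          rw [Finset.sum_add_distrib, ← Finset.mul_sum, hsv, mul_zero, add_zero]
          exact hsum x hx c
      exact absurd (hmax _ hmem) (not_le.mpr hgt)
  refine ⟨hmain, ?_, ?_, ?_⟩
  · obtain ⟨x, hxX, hx⟩ := hXcomp.exists_isMaxOn hXne hU.continuous.continuousOn
    exact ⟨x, hmain ▸ ⟨hxX, fun y hy => hx hy⟩⟩
  · rw [hmain]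
    have hrw : {x ∈ X | ∀ y ∈ X, U y ≤ U x}
        = X ∩ ⋂ y ∈ X, {x | U y ≤ U x} := by
      ext z; simp [Set.mem_iInter]
    rw [hrw]
    exact hXcomp.inter_right
      (isClosed_biInter fun y _ => isClosed_le continuous_const hU.continuous)
  · rw [hmain]
    intro p hp q hq a b ha hb hab
    refine ⟨hXconv hp.1 hq.1 ha hb hab, fun y hy => ?_⟩
    have h1 : a • U p + b • U q ≤ U (a • p + b • q) :=
      hUconc.2 (hS p hp.1) (hS q hq.1) ha hb hab
    have heq : U q = U p := le_antisymm (hp.2 q hq.1) (hq.2 p hp.1)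
    have h4 : U y ≤ U p := hp.2 y hy
    simp only [smul_eq_mul, heq] at h1
    have h5 : a * U p + b * U p = U p := by rw [← add_mul, hab, one_mul]
    linarith
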